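/- For i = 1,2 let X_i, Y_i be metric spaces and f_i : X_i → Y_i bornologous maps. If f_1 is coarsely n-to-one and f_2 is coarsely m-to-one, then the product map f_1 × f_2 : X_1 × X_2 → Y_1 × Y_2 (with ℓ¹-product metrics) is coarsely nm-to-one. -/

import Mathlib

open Bornology Metric

/-- `f` is bornologous. -/
def Bornologous {X Y : Type*} [PseudoMetricSpace X] [PseudoMetricSpace Y] (f : X → Y) : Prop :=
  ∃ ψ : ℝ → ℝ, Monotone ψ ∧ ∀ x x', dist (f x) (f x') ≤ ψ (dist x x')

/-- `f` is coarsely `n`-to-one. -/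
def CoarselyNToOne {X Y : Type*} [PseudoMetricSpace X] [PseudoMetricSpace Y]
    (n : ℕ) (f : X → Y) : Prop :=
  ∀ R > (0:ℝ), ∃ S > (0:ℝ), ∀ A : Set Y, IsBounded A → diam A < R →
    ∃ B : Fin n → Set X, (∀ i, IsBounded (B i) ∧ diam (B i) < S) ∧ f ⁻¹' A = ⋃ i, B i

lemma dist_l1 {α β : Type*} [PseudoMetricSpace α] [PseudoMetricSpace β]
    (x y : WithLp 1 (α × β)) : dist x y = dist x.fst y.fst + dist x.snd y.snd := by
  rw [WithLp.prod_dist_eq_add (by norm_num)]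
  norm_num

lemma fst_lip {α β : Type*} [PseudoMetricSpace α] [PseudoMetricSpace β] :
    LipschitzWith 1 (fun x : WithLp 1 (α × β) => x.fst) := by
  intro x y
  rw [edist_nndist, edist_nndist, ENNReal.coe_one, one_mul, ENNReal.coe_le_coe,
    ← NNReal.coe_le_coe, coe_nndist, coe_nndist, dist_l1]
  exact le_add_of_nonneg_right dist_nonneg

lemma snd_lip {α β : Type*} [PseudoMetricSpace α] [PseudoMetricSpace β] :
    LipschitzWith 1 (fun x : WithLp 1 (α × β) => x.snd) := by
  intro x y
  rw [edist_nndist, edist_nndist, ENNReal.coe_one, one_mul, ENNReal.coe_le_coe,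
    ← NNReal.coe_le_coe, coe_nndist, coe_nndist, dist_l1]
  exact le_add_of_nonneg_left dist_nonneg

/-- If `f₁` is coarsely `n`-to-one and `f₂` is coarsely `m`-to-one (both bornologous), then
`f₁ × f₂` between the ℓ¹-products is coarsely `nm`-to-one. -/
theorem stmt_6 {X₁ X₂ Y₁ Y₂ : Type*}
    [MetricSpace X₁] [MetricSpace X₂] [MetricSpace Y₁] [MetricSpace Y₂]
    (f₁ : X₁ → Y₁) (f₂ : X₂ → Y₂) (h₁ : Bornologous f₁) (h₂ : Bornologous f₂)
    (n m : ℕ) (hn : CoarselyNToOne n f₁) (hm : CoarselyNToOne m f₂) :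
    CoarselyNToOne (n * m)
      (fun p : WithLp 1 (X₁ × X₂) =>
        (WithLp.equiv 1 (Y₁ × Y₂)).symm
          (f₁ (WithLp.equiv 1 (X₁ × X₂) p).1, f₂ (WithLp.equiv 1 (X₁ × X₂) p).2)) := by
  intro R hR
  obtain ⟨S₁, hS₁, H₁⟩ := hn R hR
  obtain ⟨S₂, hS₂, H₂⟩ := hm R hR
  refine ⟨S₁ + S₂, by linarith, ?_⟩
  intro A hA hdA
  set f := (fun p : WithLp 1 (X₁ × X₂) =>
        (WithLp.equiv 1 (Y₁ × Y₂)).symm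
          (f₁ (WithLp.equiv 1 (X₁ × X₂) p).1, f₂ (WithLp.equiv 1 (X₁ × X₂) p).2)) with hf
  set A₁ : Set Y₁ := (fun y : WithLp 1 (Y₁ × Y₂) => y.fst) '' A with hA₁def
  set A₂ : Set Y₂ := (fun y : WithLp 1 (Y₁ × Y₂) => y.snd) '' A with hA₂def
  have hA₁b : IsBounded A₁ := fst_lip.isBounded_image hA
  have hA₂b : IsBounded A₂ := snd_lip.isBounded_image hA
  have hA₁d : diam A₁ < R := by
    have h := fst_lip.diam_image_le A hA
    rw [NNReal.coe_one, one_mul] at h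
    exact lt_of_le_of_lt h hdA
  have hA₂d : diam A₂ < R := by
    have h := snd_lip.diam_image_le A hA
    rw [NNReal.coe_one, one_mul] at h
    exact lt_of_le_of_lt h hdA
  obtain ⟨B₁, hB₁, hU₁⟩ := H₁ A₁ hA₁b hA₁d
  obtain ⟨B₂, hB₂, hU₂⟩ := H₂ A₂ hA₂b hA₂d
  set e : Fin n × Fin m ≃ Fin (n * m) := finProdFinEquiv
  refine ⟨fun k => (f ⁻¹' A) ∩ {x | x.fst ∈ B₁ (e.symm k).1 ∧ x.snd ∈ B₂ (e.symm k).2}, ?_, ?_⟩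
  · intro k
    set C := (f ⁻¹' A) ∩ {x : WithLp 1 (X₁ × X₂) |
        x.fst ∈ B₁ (e.symm k).1 ∧ x.snd ∈ B₂ (e.symm k).2} with hC
    obtain ⟨hb1, hd1⟩ := hB₁ (e.symm k).1
    obtain ⟨hb2, hd2⟩ := hB₂ (e.symm k).2
    have hdist : ∀ x ∈ C, ∀ y ∈ C, dist x y ≤ diam (B₁ (e.symm k).1) + diam (B₂ (e.symm k).2) := by
      intro x hx y hy
      rw [dist_l1]
      exact add_le_add (dist_le_diam_of_mem hb1 hx.2.1 hy.2.1)
        (dist_le_diam_of_mem hb2 hx.2.2 hy.2.2)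
    constructor
    · exact Metric.isBounded_iff.mpr ⟨_, fun x hx y hy => hdist x hx y hy⟩
    · calc diam C ≤ diam (B₁ (e.symm k).1) + diam (B₂ (e.symm k).2) :=
            diam_le_of_forall_dist_le (by positivity) hdist
        _ < S₁ + S₂ := add_lt_add hd1 hd2
  · ext x
    simp only [Set.mem_iUnion, Set.mem_inter_iff, Set.mem_setOf_eq]
    constructor
    · intro hx
      have hx1 : x.fst ∈ f₁ ⁻¹' A₁ := ⟨f x, hx, rfl⟩
      have hx2 : x.snd ∈ f₂ ⁻¹' A₂ := ⟨f x, hx, rfl⟩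
      rw [hU₁, Set.mem_iUnion] at hx1
      rw [hU₂, Set.mem_iUnion] at hx2
      obtain ⟨i, hi⟩ := hx1
      obtain ⟨j, hj⟩ := hx2
      exact ⟨e (i, j), hx, by simp only [e, Equiv.symm_apply_apply]; exact hi, by simp only [e, Equiv.symm_apply_apply]; exact hj⟩
    · rintro ⟨k, hk, -⟩
      exact hk
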